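/- Algebraic relations for the Marchenko–Pastur Stieltjes transforms. Fix y > 0. For every z in the complex upper half-plane, m_1 and m_2 satisfy the self-consistent equations m_1(z) + 1/(z − (1−y) + z y m_1(z)) = 0 and m_2(z) + 1/(z + (1−y) + z m_2(z)) = 0, the relation m_1(z) = (y^{−1} − 1)/z + y^{−1} m_2(z), and consequently 1 + z m_1(z) = −z m_1(z) m_2(z) and 1 + z m_2(z) = −z y m_1(z) m_2(z). -/

import Mathlib

/-!
Statement 9: Algebraic relations for the Marchenko–Pastur Stieltjes transforms
(equations (4.x) of Bao–Ding–Wang).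
-/

noncomputable section

/-- `λ₊ = (1 + √y)²`. -/
def lamP (y : ℝ) : ℝ := (1 + Real.sqrt y) ^ 2

/-- `λ₋ = (1 − √y)²`. -/
def lamM (y : ℝ) : ℝ := (1 - Real.sqrt y) ^ 2

/-- The Marchenko–Pastur Stieltjes transform `m₁` on the upper half-plane, where the square
root is the principal complex square root (branch cut on the negative real axis). -/
def m1C (y : ℝ) (z : ℂ) : ℂ :=
  (1 - (y : ℂ) - z + Complex.I * (((lamP y : ℂ) - z) * (z - (lamM y : ℂ))) ^ ((1 : ℂ) / 2))
    / (2 * z * (y : ℂ))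

/-- The Marchenko–Pastur Stieltjes transform `m₂` on the upper half-plane. -/
def m2C (y : ℝ) (z : ℂ) : ℂ :=
  ((y : ℂ) - 1 - z + Complex.I * (((lamP y : ℂ) - z) * (z - (lamM y : ℂ))) ^ ((1 : ℂ) / 2))
    / (2 * z)

/-- **Algebraic relations for the Marchenko–Pastur Stieltjes transforms**: the
self-consistent equations, the linear relation between `m₁` and `m₂`, and the product
identities `1 + z m₁ = −z m₁ m₂` and `1 + z m₂ = −z y m₁ m₂`. -/
theorem mp_stieltjes_relations (y : ℝ) (hy : 0 < y) (z : ℂ) (hz : 0 < z.im) :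
    m1C y z + 1 / (z - (1 - (y : ℂ)) + z * (y : ℂ) * m1C y z) = 0 ∧
    m2C y z + 1 / (z + (1 - (y : ℂ)) + z * m2C y z) = 0 ∧
    m1C y z = ((y : ℂ)⁻¹ - 1) / z + (y : ℂ)⁻¹ * m2C y z ∧
    1 + z * m1C y z = -(z * m1C y z * m2C y z) ∧
    1 + z * m2C y z = -(z * (y : ℂ) * m1C y z * m2C y z) := by
  set w : ℂ := ((lamP y : ℂ) - z) * (z - (lamM y : ℂ)) with hw_def
  set s : ℂ := w ^ ((1 : ℂ) / 2) with hs_def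
  set r : ℂ := Complex.I * s with hr_def
  have hz0 : z ≠ 0 := by
    intro h; rw [h] at hz; simp at hz
  have hy0 : (y : ℂ) ≠ 0 := by exact_mod_cast hy.ne'
  have hw0 : w ≠ 0 := by
    apply mul_ne_zero
    · intro h
      have : ((lamP y : ℂ) - z).im = 0 := by rw [h]; simp
      simp [Complex.sub_im] at this
      linarith [hz, this]
    · intro h
      have : (z - (lamM y : ℂ)).im = 0 := by rw [h]; simp
      simp [Complex.sub_im] at this
      linarith [hz, this]
  have hs2 : s * s = w := by
    rw [hs_def, ← Complex.cpow_add _ _ hw0]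
    norm_num
  have hsq : ((Real.sqrt y : ℂ)) ^ 2 = (y : ℂ) := by
    norm_cast; exact Real.sq_sqrt hy.le
  have hr2 : r ^ 2 = z ^ 2 - 2 * (1 + (y : ℂ)) * z + (1 - (y : ℂ)) ^ 2 := by
    have hrw : r ^ 2 = -w := by
      rw [hr_def]; linear_combination s * s * Complex.I_sq - hs2
    rw [hrw, hw_def]
    simp only [lamP, lamM]
    push_cast
    linear_combination ((Real.sqrt y : ℂ) ^ 2 + (y : ℂ) - 2 * z - 2) * hsq
  have hm1 : m1C y z = (1 - (y : ℂ) - z + r) / (2 * z * (y : ℂ)) := rfl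
  have hm2 : m2C y z = ((y : ℂ) - 1 - z + r) / (2 * z) := rfl
  have hne1 : z - (1 - (y : ℂ)) + r ≠ 0 := by
    intro h
    have hr' : r = 1 - (y : ℂ) - z := by linear_combination h
    have h4 : (4 : ℂ) * y * z = 0 := by
      linear_combination (-(r + (1 - (y : ℂ) - z))) * hr' + hr2
    simp [hy0, hz0] at h4
  have hne2 : z + (1 - (y : ℂ)) + r ≠ 0 := by
    intro h
    have hr' : r = (y : ℂ) - 1 - z := by linear_combination h
    have h4 : (4 : ℂ) * z = 0 := by
      linear_combination (-(r + ((y : ℂ) - 1 - z))) * hr' + hr2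
    simp [hz0] at h4
  have hD1 : z - (1 - (y : ℂ)) + z * (y : ℂ) * m1C y z = (z - (1 - (y : ℂ)) + r) / 2 := by
    rw [hm1]; field_simp; ring
  have hD2 : z + (1 - (y : ℂ)) + z * m2C y z = (z + (1 - (y : ℂ)) + r) / 2 := by
    rw [hm2]; field_simp; ring
  refine ⟨?_, ?_, ?_, ?_, ?_⟩
  · rw [hD1, hm1]
    field_simp
    linear_combination hr2
  · rw [hD2, hm2]
    field_simp
    linear_combination hr2
  · rw [hm1, hm2]
    field_simp
    ring
  · rw [hm1, hm2]
    field_simp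
    linear_combination hr2
  · rw [hm1, hm2]
    field_simp
    linear_combination hr2

end
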